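/- Let Γ be a rooted digraph satisfying P0, P1 and P2 with ultimate in-valency r_N. Then r_N divides the out-valency m of Γ. -/

import Mathlib

variable {V : Type*}

/-- Directed walks of length `n` (`n`-arcs). -/
def arcOf (E : V → V → Prop) : ℕ → V → V → Prop
  | 0 => fun x y => x = y
  | n + 1 => fun x y => ∃ z, E x z ∧ arcOf E n z y

/-- Vertices reachable from `x` by a directed path of length exactly `n`. -/
def descN (E : V → V → Prop) (n : ℕ) (x : V) : Set V := {y | arcOf E n x y}

/-- The descendant set of `x` (including `x` itself). -/
def desc (E : V → V → Prop) (x : V) : Set V := {y | ∃ n, arcOf E n x y}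

theorem self_mem_desc (E : V → V → Prop) (x : V) : x ∈ desc E x := ⟨0, by simp [arcOf]⟩

def descSet (E : V → V → Prop) (S : Set V) : Set V := ⋃ x ∈ S, desc E x

theorem self_mem_descSet (E : V → V → Prop) {S : Set V} {x : V} (hx : x ∈ S) :
    x ∈ descSet E S := Set.mem_biUnion hx (self_mem_desc E x)

def outSet (E : V → V → Prop) (x : V) : Set V := {y | E x y}

def inSet (E : V → V → Prop) (x : V) : Set V := {y | E y x}

def IsAut (E : V → V → Prop) (g : Equiv.Perm V) : Prop := ∀ x y, E x y ↔ E (g x) (g y)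

def Rooted (E : V → V → Prop) (α : V) : Prop := ∀ y, y ∈ desc E α

def P0 (E : V → V → Prop) (α : V) (m : ℕ) : Prop :=
  0 < m ∧ (∀ x, (outSet E x).Finite ∧ (outSet E x).ncard = m) ∧
    ∀ s t : ℕ, s ≠ t → Disjoint (descN E s α) (descN E t α)

def P1 (E : V → V → Prop) : Prop :=
  ∀ u : V, ∃ f : desc E u ≃ V, ∀ x y : desc E u, (E x.1 y.1 ↔ E (f x) (f y))

def P2 (E : V → V → Prop) (α : V) : Prop :=
  ∀ i : ℕ, ∀ x ∈ descN E i α, ∀ y ∈ descN E i α,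
    ∃ g : Equiv.Perm V, IsAut E g ∧ g α = α ∧ g x = y

def P3 (E : V → V → Prop) (α : V) : Prop :=
  ∀ i : ℕ, (descN E i α).ncard < (descN E (i + 1) α).ncard

def EdgeTrans (E : V → V → Prop) : Prop :=
  ∀ a b c d : V, E a b → E c d → ∃ g : Equiv.Perm V, IsAut E g ∧ g a = c ∧ g b = d

def VertexTrans (E : V → V → Prop) : Prop :=
  ∀ u v : V, ∃ g : Equiv.Perm V, IsAut E g ∧ g u = v

def NoDirectedCycles (E : V → V → Prop) : Prop :=
  ∀ s : ℕ, 1 ≤ s → ∀ x : V, ¬ arcOf E s x x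

def HasPropZ {W : Type*} (E : W → W → Prop) : Prop :=
  ∃ f : W → ℤ, Function.Surjective f ∧ ∀ x y : W, E x y → f y = f x + 1

def deltaSetoid (E : V → V → Prop) (n : ℕ) : Setoid V :=
  ⟨fun u v => descN E n u = descN E n v, ⟨fun _ => rfl, Eq.symm, Eq.trans⟩⟩

def QEdge (E : V → V → Prop) (n : ℕ)
    (A B : Quotient (deltaSetoid E n)) : Prop :=
  ∃ a b : V, Quotient.mk (deltaSetoid E n) a = A ∧ Quotient.mk (deltaSetoid E n) b = B ∧ E a b

def cls (E : V → V → Prop) (n : ℕ) (v : V) : Set V := {u | descN E n u = descN E n v}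

def QEdgeSet (E : V → V → Prop) (A B : Set V) : Prop := ∃ a ∈ A, ∃ b ∈ B, E a b

def WDH (E : V → V → Prop) : Prop :=
  VertexTrans E ∧
  ∀ (X Y : Finset V) (f : descSet E (↑X : Set V) ≃ descSet E (↑Y : Set V)),
    (∀ a b : descSet E (↑X : Set V), (E a.1 b.1 ↔ E (f a).1 (f b).1)) →
    ∃ g : Equiv.Perm V, IsAut E g ∧
      ∀ (x : V) (hx : x ∈ X), g x = (f ⟨x, self_mem_descSet E (by exact_mod_cast hx)⟩).1

def EdgeT (E : V → V → Prop) := {p : V × V // E p.1 p.2}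

def reachSetoid (E : V → V → Prop) : Setoid (EdgeT E) :=
  ⟨Relation.EqvGen (fun a b => a.1.1 = b.1.1 ∨ a.1.2 = b.1.2),
    Relation.EqvGen.is_equivalence _⟩

def AlSources (E : V → V → Prop) (A : Quotient (reachSetoid E)) : Set V :=
  {v | ∃ e : EdgeT E, Quotient.mk (reachSetoid E) e = A ∧ v = e.1.1}

def AlSinks (E : V → V → Prop) (A : Quotient (reachSetoid E)) : Set V :=
  {v | ∃ e : EdgeT E, Quotient.mk (reachSetoid E) e = A ∧ v = e.1.2}

def AlEdge (E : V → V → Prop) (A B : Quotient (reachSetoid E)) : Prop :=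
  ∃ v, v ∈ AlSinks E A ∧ v ∈ AlSources E B

lemma arcOf_snoc (E : V → V → Prop) {n : ℕ} {x y z : V}
    (h : arcOf E n x y) (he : E y z) : arcOf E (n + 1) x z := by
  induction n generalizing x with
  | zero => cases h; exact ⟨z, he, rfl⟩
  | succ n ih =>
    obtain ⟨w, hw, ha⟩ := h
    exact ⟨w, hw, ih ha⟩

lemma arcOf_succ_iff (E : V → V → Prop) {n : ℕ} {x y : V} :
    arcOf E (n + 1) x y ↔ ∃ z, arcOf E n x z ∧ E z y := by
  induction n generalizing x with
  | zero =>
    constructor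
    · rintro ⟨z, hz, h⟩; cases h; exact ⟨x, rfl, hz⟩
    · rintro ⟨z, hz, he⟩; cases hz; exact ⟨y, he, rfl⟩
  | succ n ih =>
    constructor
    · rintro ⟨w, hw, ha⟩
      obtain ⟨z, hz, he⟩ := ih.1 ha
      exact ⟨z, ⟨w, hw, hz⟩, he⟩
    · rintro ⟨z, ⟨w, hw, hz⟩, he⟩
      exact ⟨w, hw, ih.2 ⟨z, hz, he⟩⟩

lemma outSet_subset_level (E : V → V → Prop) {α : V} {j : ℕ} {x : V}
    (hx : x ∈ descN E j α) : outSet E x ⊆ descN E (j + 1) α :=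
  fun _ hy => arcOf_snoc E hx hy

lemma level_finite (E : V → V → Prop) (α : V) (m : ℕ) (h0 : P0 E α m) :
    ∀ j : ℕ, (descN E j α).Finite := by
  intro j
  induction j with
  | zero =>
    apply Set.Finite.subset (Set.finite_singleton α)
    intro y hy
    exact (show α = y from hy) ▸ rfl
  | succ j ih =>
    apply Set.Finite.subset (Set.Finite.biUnion ih (fun x _ => (h0.2.1 x).1))
    intro y hy
    obtain ⟨z, hz, he⟩ := (arcOf_succ_iff E).1 hy
    exact Set.mem_biUnion hz he

lemma level_nonempty (E : V → V → Prop) (α : V) (m : ℕ) (h0 : P0 E α m) :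
    ∀ j : ℕ, (descN E j α).Nonempty := by
  intro j
  induction j with
  | zero => exact ⟨α, rfl⟩
  | succ j ih =>
    obtain ⟨x, hx⟩ := ih
    have hout : (outSet E x).Nonempty := by
      apply Set.nonempty_of_ncard_ne_zero
      rw [(h0.2.1 x).2]
      have := h0.1
      omega
    obtain ⟨y, hy⟩ := hout
    exact ⟨y, outSet_subset_level E hx hy⟩

lemma inSet_subset_level (E : V → V → Prop) {α : V} {m : ℕ} (hroot : Rooted E α)
    (h0 : P0 E α m) {j : ℕ} {y : V} (hy : y ∈ descN E (j + 1) α) :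
    inSet E y ⊆ descN E j α := by
  intro z hz
  obtain ⟨s, hs⟩ := hroot z
  have hy' : y ∈ descN E (s + 1) α := arcOf_snoc E hs hz
  have : s = j := by
    by_contra hne
    exact Set.disjoint_left.1 (h0.2.2 (s + 1) (j + 1) (by omega)) hy' hy
  exact this ▸ hs

lemma level_count (E : V → V → Prop) (α : V) (m : ℕ) (hroot : Rooted E α)
    (h0 : P0 E α m) (j : ℕ) (rj : ℕ)
    (hrj : ∀ y ∈ descN E (j + 1) α, (inSet E y).ncard = rj) :
    (descN E (j + 1) α).ncard * rj = (descN E j α).ncard * m := by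
  classical
  have hfA : (descN E j α).Finite := level_finite E α m h0 j
  have hfB : (descN E (j + 1) α).Finite := level_finite E α m h0 (j + 1)
  set A : Finset V := hfA.toFinset with hA
  set B : Finset V := hfB.toFinset with hB
  set T : Finset (V × V) := (A ×ˢ B).filter (fun p => E p.1 p.2) with hT
  have hmemT : ∀ p : V × V, p ∈ T ↔ p.1 ∈ descN E j α ∧ p.2 ∈ descN E (j+1) α ∧ E p.1 p.2 := by
    intro p
    simp only [hT, Finset.mem_filter, Finset.mem_product, hA, hB, Set.Finite.mem_toFinset]
    tauto
  -- count by first coordinate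
  have hcount1 : T.card = A.card * m := by
    have h1 : T.card = ∑ x ∈ A, ((T.filter (fun p => p.1 = x)).card) := by
      apply Finset.card_eq_sum_card_fiberwise
      intro p hp
      rw [hA, Finset.mem_coe, Set.Finite.mem_toFinset]
      exact ((hmemT p).1 hp).1
    rw [h1]
    rw [Finset.sum_congr rfl (fun x hx => ?_), Finset.sum_const, smul_eq_mul]
    have hxA : x ∈ descN E j α := by rwa [hA, Set.Finite.mem_toFinset] at hx
    have himg : T.filter (fun p => p.1 = x) =
        ((h0.2.1 x).1.toFinset).image (fun y => (x, y)) := by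
      ext p
      simp only [Finset.mem_filter, Finset.mem_image, Set.Finite.mem_toFinset]
      constructor
      · rintro ⟨hp, rfl⟩
        exact ⟨p.2, ((hmemT p).1 hp).2.2, rfl⟩
      · rintro ⟨y, hy, rfl⟩
        refine ⟨(hmemT (x, y)).2 ⟨hxA, outSet_subset_level E hxA hy, hy⟩, rfl⟩
    rw [himg, Finset.card_image_of_injective _ (fun a b h => (Prod.mk.injEq _ _ _ _ ▸ h).2)]
    rw [← Set.ncard_eq_toFinset_card _ (h0.2.1 x).1]
    exact (h0.2.1 x).2
  -- count by second coordinate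
  have hcount2 : T.card = B.card * rj := by
    have h1 : T.card = ∑ y ∈ B, ((T.filter (fun p => p.2 = y)).card) := by
      apply Finset.card_eq_sum_card_fiberwise
      intro p hp
      rw [hB, Finset.mem_coe, Set.Finite.mem_toFinset]
      exact ((hmemT p).1 hp).2.1
    rw [h1]
    rw [Finset.sum_congr rfl (fun y hy => ?_), Finset.sum_const, smul_eq_mul]
    have hyB : y ∈ descN E (j + 1) α := by rwa [hB, Set.Finite.mem_toFinset] at hy
    have hfin : (inSet E y).Finite := hfA.subset (inSet_subset_level E hroot h0 hyB)
    have himg : T.filter (fun p => p.2 = y) =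
        (hfin.toFinset).image (fun x => (x, y)) := by
      ext p
      simp only [Finset.mem_filter, Finset.mem_image, Set.Finite.mem_toFinset]
      constructor
      · rintro ⟨hp, rfl⟩
        exact ⟨p.1, ((hmemT p).1 hp).2.2, rfl⟩
      · rintro ⟨x, hx, rfl⟩
        exact ⟨(hmemT (x, y)).2 ⟨inSet_subset_level E hroot h0 hyB hx, hyB, hx⟩, rfl⟩
    rw [himg, Finset.card_image_of_injective _ (fun a b h => (Prod.mk.injEq _ _ _ _ ▸ h).1)]
    rw [← Set.ncard_eq_toFinset_card _ hfin]
    exact hrj y hyB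
  rw [Set.ncard_eq_toFinset_card _ hfB, Set.ncard_eq_toFinset_card _ hfA]
  rw [← hcount2, hcount1]

lemma pow_dvd_imp_dvd {a r m : ℕ} (ha : a ≠ 0) (hr : r ≠ 0) (hm : m ≠ 0)
    (h : ∀ k : ℕ, r ^ k ∣ a * m ^ k) : r ∣ m := by
  rw [← Nat.factorization_le_iff_dvd hr hm]
  rw [Finsupp.le_def]
  intro p
  by_contra hlt
  push_neg at hlt
  set k := a.factorization p + 1 with hk
  have hd := h k
  have h2 := (Nat.factorization_le_iff_dvd (pow_ne_zero k hr)
    (by positivity)).2 hd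
  have h3 := h2 p
  rw [Nat.factorization_pow, Nat.factorization_mul ha (pow_ne_zero k hm),
    Nat.factorization_pow] at h3
  simp only [Finsupp.coe_add, Finsupp.coe_smul, Pi.add_apply, Pi.smul_apply,
    smul_eq_mul] at h3
  nlinarith [h3, hlt]

/-- the ultimate in-valency divides the out-valency. -/
theorem ultimate_invalency_dvd (E : V → V → Prop) (α : V) (m N : ℕ) (r : ℕ → ℕ)
    (hroot : Rooted E α) (h0 : P0 E α m) (h1 : P1 E) (h2 : P2 E α)
    (hr : ∀ i : ℕ, 1 ≤ i → ∀ x ∈ descN E i α, (inSet E x).ncard = r i)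
    (hN1 : 1 ≤ N) (hNconst : ∀ j : ℕ, N ≤ j → r j = r N) :
    r N ∣ m := by
  set n : ℕ → ℕ := fun j => (descN E j α).ncard with hn
  have key : ∀ j : ℕ, n (j + 1) * r (j + 1) = n j * m := by
    intro j
    exact level_count E α m hroot h0 j (r (j + 1)) (hr (j + 1) (by omega))
  have hnpos : ∀ j, 0 < n j := by
    intro j
    rw [hn]
    exact (level_nonempty E α m h0 j).ncard_pos (level_finite E α m h0 j)
  have hiter : ∀ k : ℕ, n (N + k) * (r N) ^ k = n N * m ^ k := by
    intro k
    induction k with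
    | zero => simp
    | succ k ih =>
      have h1 : r (N + k + 1) = r N := hNconst (N + k + 1) (by omega)
      show n (N + k + 1) * r N ^ (k + 1) = n N * m ^ (k + 1)
      calc n (N + k + 1) * r N ^ (k + 1)
          = (n (N + k + 1) * r (N + k + 1)) * r N ^ k := by rw [h1]; ring
        _ = (n (N + k) * m) * r N ^ k := by rw [key (N + k)]
        _ = (n (N + k) * r N ^ k) * m := by ring
        _ = n N * m ^ (k + 1) := by rw [ih]; ring
  have hrpos : r N ≠ 0 := by
    intro h
    have h1 := key N
    rw [hNconst (N + 1) (by omega), h, mul_zero] at h1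
    have := Nat.mul_pos (hnpos N) h0.1
    omega
  apply pow_dvd_imp_dvd (a := n N) (hnpos N).ne' hrpos h0.1.ne'
  intro k
  exact ⟨n (N + k), by rw [← hiter k]; ring⟩
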